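/- Fix n ≥ 1, ε: [2n] → {1,*}, and pairings p, q of [2n] compatible with ε. Suppose the partition p∨q is crossing, i.e. there exist a < b < c < d in [2n] with a, c in one block of p∨q and b, d in a different block. Then sup over all N-indexed choices of 2n-tuples of permutations σ_1,…,σ_{2n} of [N]×[N] of the cardinality |A^{(p,q)}| is o( N^{ 2n + 1 − |p∨q| } ) as N → ∞; that is, for every sequence of such tuples of permutations, |A^{(p,q)}_N| / N^{ 2n + 1 − |p∨q| } → 0. -/

import Mathlib

open Filter

/-- `(k_s, l_s) = σ_s ∘ ε_s (i_s, j_s)`. -/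
def klMap {n N : ℕ} (ε : Fin (2 * n) → Bool) (σ : Fin (2 * n) → Equiv.Perm (Fin N × Fin N))
    (x : (Fin (2 * n) → Fin N) × (Fin (2 * n) → Fin N)) (s : Fin (2 * n)) : Fin N × Fin N :=
  if ε s then (σ s) (x.1 s, x.2 s) else (σ s) (x.2 s, x.1 s)

/-- The set `A^{(p,q)}` of tuples `(i_1, j_1, …, i_{2n}, j_{2n})` with `j_s = i_{s+1}`
(cyclically, so that `j_{2n} = i_1`), `k_s = k_{p(s)}` and `l_s = l_{q(s)}` for all `s`. -/
def tupleSet (n N : ℕ) (ε : Fin (2 * n) → Bool) (σ : Fin (2 * n) → Equiv.Perm (Fin N × Fin N))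
    (p q : Equiv.Perm (Fin (2 * n))) :
    Finset ((Fin (2 * n) → Fin N) × (Fin (2 * n) → Fin N)) :=
  Finset.univ.filter fun x =>
    (∀ s, x.2 s = x.1 (finRotate (2 * n) s)) ∧
    (∀ s, (klMap ε σ x s).1 = (klMap ε σ x (p s)).1) ∧
    (∀ s, (klMap ε σ x s).2 = (klMap ε σ x (q s)).2)

/-- `F(S)`:  the number of families `(i_s, j_s)_{s ∈ S}` that extend to an element of
`A^{(p,q)}`. -/
def Fcnt (n N : ℕ) (ε : Fin (2 * n) → Bool) (σ : Fin (2 * n) → Equiv.Perm (Fin N × Fin N))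
    (p q : Equiv.Perm (Fin (2 * n))) (S : Finset (Fin (2 * n))) : ℕ :=
  ((tupleSet n N ε σ p q).image fun x => fun s : {a // a ∈ S} => (x.1 s.1, x.2 s.1)).card

/-- The join `p ∨ q` of the two pair partitions, as an equivalence relation. -/
def joinRel {m : ℕ} (p q : Equiv.Perm (Fin m)) : Fin m → Fin m → Prop :=
  Relation.EqvGen fun a b => p a = b ∨ q a = b

/-- `|p ∨ q|`, the number of blocks of the join partition. -/
noncomputable def numBlocks {m : ℕ} (p q : Equiv.Perm (Fin m)) : ℕ :=
  Set.ncard {B : Set (Fin m) | ∃ a, B = {x | joinRel p q a x}}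

namespace Stmt10

open Finset

variable {n N : ℕ}

lemma rot_eq {k : ℕ} {u v : Fin k} (h : u.val + 1 = v.val) : finRotate k u = v := by
  cases k with
  | zero => exact u.elim0
  | succ m =>
    have hum : u.val < m := by have := v.isLt; omega
    rw [finRotate_succ_apply]
    apply Fin.ext
    rw [Fin.val_add_one_of_lt (by rw [Fin.lt_iff_val_lt_val, Fin.val_last]; omega)]
    exact h

lemma rot_eq_zero {k : ℕ} {u v : Fin k} (hu : u.val + 1 = k) (hv : v.val = 0) :
    finRotate k u = v := by
  cases k with
  | zero => exact u.elim0
  | succ m =>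
    have hu' : u = Fin.last m := by apply Fin.ext; rw [Fin.val_last]; omega
    subst hu'
    rw [finRotate_succ_apply]
    apply Fin.ext
    rw [Fin.last_add_one]
    simp [hv]

variable (ε : Fin (2 * n) → Bool) (σ : Fin (2 * n) → Equiv.Perm (Fin N × Fin N))
  (p q : Equiv.Perm (Fin (2 * n)))

def fmap (ord : Fin (2 * n) → ℕ) (t : ℕ)
    (z : (Fin (2 * n) → Fin N) × (Fin (2 * n) → Fin N)) : Fin (2 * n) → Option (Fin N × Fin N) :=
  fun u => if ord u < t then some (z.1 u, z.2 u) else none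

noncomputable def Gcnt (ord : Fin (2 * n) → ℕ) (t : ℕ) : ℕ := by
  classical exact ((tupleSet n N ε σ p q).image (fmap ord t)).card

lemma mem_tupleSet_iff {z : (Fin (2 * n) → Fin N) × (Fin (2 * n) → Fin N)} :
    z ∈ tupleSet n N ε σ p q ↔
    (∀ s, z.2 s = z.1 (finRotate (2 * n) s)) ∧
    (∀ s, (klMap ε σ z s).1 = (klMap ε σ z (p s)).1) ∧
    (∀ s, (klMap ε σ z s).2 = (klMap ε σ z (q s)).2) := by
  unfold tupleSet
  simp only [Finset.mem_filter, Finset.mem_univ, true_and]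

lemma step_gen (ord : Fin (2 * n) → ℕ) (hinj : Function.Injective ord) (s : Fin (2 * n))
    {E : Type} [Fintype E]
    (extra : ((Fin (2 * n) → Fin N) × (Fin (2 * n) → Fin N)) → E)
    (recon : (Fin (2 * n) → Option (Fin N × Fin N)) → E → Fin N × Fin N)
    (hrecon : ∀ z ∈ tupleSet n N ε σ p q,
      recon (fmap ord (ord s) z) (extra z) = (z.1 s, z.2 s)) :
    Gcnt ε σ p q ord (ord s + 1) ≤ Fintype.card E * Gcnt ε σ p q ord (ord s) := by
  classical
  set A := tupleSet n N ε σ p q with hA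
  have heq : ∀ z ∈ A, fmap ord (ord s + 1) z
      = Function.update (fmap ord (ord s) z) s
          (some (recon (fmap ord (ord s) z) (extra z))) := by
    intro z hz
    funext u
    rcases eq_or_ne u s with rfl | hu
    · rw [Function.update_self, hrecon z hz]
      simp [fmap]
    · rw [Function.update_of_ne hu]
      have h1 : ord u ≠ ord s := fun h => hu (hinj h)
      have h2 : (ord u < ord s + 1) = (ord u < ord s) := by
        apply propext; constructor <;> (intro h'; omega)
      simp only [fmap, h2]
  have hG1 : Gcnt ε σ p q ord (ord s + 1) = (A.image (fmap ord (ord s + 1))).card := by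
    unfold Gcnt; rfl
  have hG0 : Gcnt ε σ p q ord (ord s) = (A.image (fmap ord (ord s))).card := by
    unfold Gcnt; rfl
  rw [hG1, hG0]
  calc (A.image (fmap ord (ord s + 1))).card
      = (A.image (fun z => Function.update (fmap ord (ord s) z) s
          (some (recon (fmap ord (ord s) z) (extra z))))).card := by
        rw [Finset.image_congr (fun z hz => heq z hz)]
    _ ≤ (A.image (fun z => (fmap ord (ord s) z, extra z))).card := by
        have h3 : (A.image (fun z => Function.update (fmap ord (ord s) z) s
            (some (recon (fmap ord (ord s) z) (extra z)))))
            = (A.image (fun z => (fmap ord (ord s) z, extra z))).image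
              (fun y => Function.update y.1 s (some (recon y.1 y.2))) := by
          rw [Finset.image_image]; rfl
        rw [h3]
        exact Finset.card_image_le
    _ ≤ ((A.image (fmap ord (ord s))) ×ˢ (Finset.univ : Finset E)).card := by
        apply Finset.card_le_card
        intro y hy
        simp only [Finset.mem_image] at hy
        obtain ⟨z, hz, rfl⟩ := hy
        rw [Finset.mem_product]
        exact ⟨Finset.mem_image_of_mem _ hz, Finset.mem_univ _⟩
    _ = Fintype.card E * (A.image (fmap ord (ord s))).card := by
        rw [Finset.card_product, Finset.card_univ, mul_comm]


def klO (hN : 0 < N) (b : Fin (2 * n) → Option (Fin N × Fin N)) (u : Fin (2 * n)) :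
    Fin N × Fin N :=
  klMap ε σ (fun w => ((b w).getD (⟨0, hN⟩, ⟨0, hN⟩)).1,
             fun w => ((b w).getD (⟨0, hN⟩, ⟨0, hN⟩)).2) u

lemma klO_fmap (hN : 0 < N) (ord : Fin (2 * n) → ℕ) (t : ℕ)
    (z : (Fin (2 * n) → Fin N) × (Fin (2 * n) → Fin N)) (u : Fin (2 * n)) (hu : ord u < t) :
    klO ε σ hN (fmap ord t z) u = klMap ε σ z u := by
  unfold klO klMap fmap
  simp [hu]

def oldc (ord : Fin (2 * n) → ℕ) (s : Fin (2 * n)) : ℕ :=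
  (if ord (p s) < ord s then 1 else 0) + (if ord (q s) < ord s then 1 else 0)

def prnc (ord : Fin (2 * n) → ℕ) (s : Fin (2 * n)) : ℕ :=
  (if ord (finRotate (2 * n) s) < ord s then 1 else 0) +
  (if ord ((finRotate (2 * n)).symm s) < ord s then 1 else 0)

def cost (ord : Fin (2 * n) → ℕ) (s : Fin (2 * n)) : ℕ :=
  2 - max (oldc p q ord s) (prnc ord s)

lemma unflip (s : Fin (2 * n)) (z : (Fin (2 * n) → Fin N) × (Fin (2 * n) → Fin N)) :
    (fun pr : Fin N × Fin N => if ε s then pr else pr.swap) ((σ s).symm (klMap ε σ z s))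
      = (z.1 s, z.2 s) := by
  unfold klMap
  by_cases hε : ε s <;> simp [hε]

lemma step_bound (hN : 0 < N) (ord : Fin (2 * n) → ℕ) (hinj : Function.Injective ord)
    (s : Fin (2 * n)) :
    Gcnt ε σ p q ord (ord s + 1) ≤ N ^ (cost p q ord s) * Gcnt ε σ p q ord (ord s) := by
  classical
  have hN1 : 1 ≤ N := hN
  have hfm : ∀ (z : (Fin (2 * n) → Fin N) × (Fin (2 * n) → Fin N)) (u : Fin (2 * n)),
      ord u < ord s → fmap ord (ord s) z u = some (z.1 u, z.2 u) := by
    intro z u hu; simp [fmap, hu]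
  by_cases h1 : ord (finRotate (2 * n) s) < ord s ∧ ord ((finRotate (2 * n)).symm s) < ord s
  · -- both cyclic neighbours revealed
    have hstep := step_gen ε σ p q ord hinj s (E := PUnit) (fun _ => PUnit.unit)
      (fun b _ => (((b ((finRotate (2 * n)).symm s)).getD (⟨0, hN⟩, ⟨0, hN⟩)).2,
                   ((b (finRotate (2 * n) s)).getD (⟨0, hN⟩, ⟨0, hN⟩)).1)) ?_
    · refine le_trans hstep (Nat.mul_le_mul ?_ le_rfl)
      simpa using Nat.one_le_pow _ _ hN
    · intro z hz
      obtain ⟨hz1, hz2, hz3⟩ := (mem_tupleSet_iff ε σ p q).mp hz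
      rw [hfm z _ h1.2, hfm z _ h1.1]
      simp only [Option.getD_some]
      have e1 : z.2 ((finRotate (2 * n)).symm s) = z.1 s := by
        have := hz1 ((finRotate (2 * n)).symm s)
        rwa [Equiv.apply_symm_apply] at this
      rw [e1, ← hz1 s]
  · by_cases h2 : ord (p s) < ord s ∧ ord (q s) < ord s
    · -- both partners revealed
      have hstep := step_gen ε σ p q ord hinj s (E := PUnit) (fun _ => PUnit.unit)
        (fun b _ => (fun pr : Fin N × Fin N => if ε s then pr else pr.swap)
          ((σ s).symm ((klO ε σ hN b (p s)).1, (klO ε σ hN b (q s)).2))) ?_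
      · refine le_trans hstep (Nat.mul_le_mul ?_ le_rfl)
        simpa using Nat.one_le_pow _ _ hN
      · intro z hz
        dsimp only
        obtain ⟨hz1, hz2, hz3⟩ := (mem_tupleSet_iff ε σ p q).mp hz
        rw [klO_fmap ε σ hN ord _ z _ h2.1, klO_fmap ε σ hN ord _ z _ h2.2,
          ← hz2 s, ← hz3 s]
        exact unflip ε σ s z
    · -- at most one unit of information missing or none
      by_cases h3 : ord ((finRotate (2 * n)).symm s) < ord s
      · have hstep := step_gen ε σ p q ord hinj s (E := Fin N) (fun z => z.2 s)
          (fun b e => (((b ((finRotate (2 * n)).symm s)).getD (⟨0, hN⟩, ⟨0, hN⟩)).2, e)) ?_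
        · refine le_trans hstep (Nat.mul_le_mul ?_ le_rfl)
          have ho : oldc p q ord s ≤ 1 := by unfold oldc; split_ifs <;> omega
          have hpn : prnc ord s ≤ 1 := by unfold prnc; split_ifs <;> omega
          have hm : max (oldc p q ord s) (prnc ord s) ≤ 1 := max_le ho hpn
          have hc : 1 ≤ cost p q ord s := by unfold cost; omega
          calc Fintype.card (Fin N) = N ^ 1 := by simp
            _ ≤ N ^ cost p q ord s := Nat.pow_le_pow_right hN1 hc
        · intro z hz
          obtain ⟨hz1, hz2, hz3⟩ := (mem_tupleSet_iff ε σ p q).mp hz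
          rw [hfm z _ h3]
          simp only [Option.getD_some]
          have e1 : z.2 ((finRotate (2 * n)).symm s) = z.1 s := by
            have := hz1 ((finRotate (2 * n)).symm s)
            rwa [Equiv.apply_symm_apply] at this
          rw [e1]
      · by_cases h4 : ord (finRotate (2 * n) s) < ord s
        · have hstep := step_gen ε σ p q ord hinj s (E := Fin N) (fun z => z.1 s)
            (fun b e => (e, ((b (finRotate (2 * n) s)).getD (⟨0, hN⟩, ⟨0, hN⟩)).1)) ?_
          · refine le_trans hstep (Nat.mul_le_mul ?_ le_rfl)
            have ho : oldc p q ord s ≤ 1 := by unfold oldc; split_ifs <;> omega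
            have hpn : prnc ord s ≤ 1 := by unfold prnc; split_ifs <;> omega
            have hm : max (oldc p q ord s) (prnc ord s) ≤ 1 := max_le ho hpn
            have hc : 1 ≤ cost p q ord s := by unfold cost; omega
            calc Fintype.card (Fin N) = N ^ 1 := by simp
              _ ≤ N ^ cost p q ord s := Nat.pow_le_pow_right hN1 hc
          · intro z hz
            obtain ⟨hz1, hz2, hz3⟩ := (mem_tupleSet_iff ε σ p q).mp hz
            rw [hfm z _ h4]
            simp only [Option.getD_some]
            rw [← hz1 s]
        · by_cases h5 : ord (p s) < ord s
          · have hstep := step_gen ε σ p q ord hinj s (E := Fin N)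
              (fun z => (klMap ε σ z s).2)
              (fun b e => (fun pr : Fin N × Fin N => if ε s then pr else pr.swap)
                ((σ s).symm ((klO ε σ hN b (p s)).1, e))) ?_
            · refine le_trans hstep (Nat.mul_le_mul ?_ le_rfl)
              have ho : oldc p q ord s ≤ 1 := by unfold oldc; split_ifs <;> omega
              have hpn : prnc ord s ≤ 1 := by unfold prnc; split_ifs <;> omega
              have hm : max (oldc p q ord s) (prnc ord s) ≤ 1 := max_le ho hpn
              have hc : 1 ≤ cost p q ord s := by unfold cost; omega
              calc Fintype.card (Fin N) = N ^ 1 := by simp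
                _ ≤ N ^ cost p q ord s := Nat.pow_le_pow_right hN1 hc
            · intro z hz
              dsimp only
              obtain ⟨hz1, hz2, hz3⟩ := (mem_tupleSet_iff ε σ p q).mp hz
              rw [klO_fmap ε σ hN ord _ z _ h5, ← hz2 s]
              have : ((klMap ε σ z s).1, (klMap ε σ z s).2) = klMap ε σ z s := rfl
              rw [this]
              exact unflip ε σ s z
          · by_cases h6 : ord (q s) < ord s
            · have hstep := step_gen ε σ p q ord hinj s (E := Fin N)
                (fun z => (klMap ε σ z s).1)
                (fun b e => (fun pr : Fin N × Fin N => if ε s then pr else pr.swap)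
                  ((σ s).symm (e, (klO ε σ hN b (q s)).2))) ?_
              · refine le_trans hstep (Nat.mul_le_mul ?_ le_rfl)
                have ho : oldc p q ord s ≤ 1 := by unfold oldc; split_ifs <;> omega
                have hpn : prnc ord s ≤ 1 := by unfold prnc; split_ifs <;> omega
                have hm : max (oldc p q ord s) (prnc ord s) ≤ 1 := max_le ho hpn
                have hc : 1 ≤ cost p q ord s := by unfold cost; omega
                calc Fintype.card (Fin N) = N ^ 1 := by simp
                  _ ≤ N ^ cost p q ord s := Nat.pow_le_pow_right hN1 hc
              · intro z hz
                dsimp only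
                obtain ⟨hz1, hz2, hz3⟩ := (mem_tupleSet_iff ε σ p q).mp hz
                rw [klO_fmap ε σ hN ord _ z _ h6, ← hz3 s]
                have : ((klMap ε σ z s).1, (klMap ε σ z s).2) = klMap ε σ z s := rfl
                rw [this]
                exact unflip ε σ s z
            · -- nothing known
              have hstep := step_gen ε σ p q ord hinj s (E := Fin N × Fin N)
                (fun z => (z.1 s, z.2 s)) (fun _ e => e) (fun z _ => rfl) 
              refine le_trans hstep (Nat.mul_le_mul ?_ le_rfl)
              have ho : oldc p q ord s = 0 := by unfold oldc; split_ifs <;> omega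
              have hpn : prnc ord s = 0 := by unfold prnc; split_ifs <;> omega
              have hc : cost p q ord s = 2 := by unfold cost; rw [ho, hpn]; rfl
              rw [hc]
              simp [pow_two]

lemma chain (hN : 0 < N) (ord : Fin (2 * n) → ℕ) (hinj : Function.Injective ord) (T : ℕ) :
    Gcnt ε σ p q ord T ≤
      N ^ (∑ s ∈ Finset.univ.filter (fun s => ord s < T), cost p q ord s) := by
  classical
  induction T with
  | zero =>
    have he : Finset.univ.filter (fun s : Fin (2 * n) => ord s < 0) = ∅ := by
      apply Finset.filter_false_of_mem; intro u _; omega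
    rw [he, Finset.sum_empty, pow_zero]
    unfold Gcnt
    rw [Finset.card_le_one]
    intro u hu v hv
    simp only [Finset.mem_image] at hu hv
    obtain ⟨zu, _, rfl⟩ := hu
    obtain ⟨zv, _, rfl⟩ := hv
    funext w
    simp [fmap]
  | succ T ih =>
    by_cases hex : ∃ s, ord s = T
    · obtain ⟨s, hs⟩ := hex
      have hfilter : Finset.univ.filter (fun u : Fin (2 * n) => ord u < T + 1)
          = insert s (Finset.univ.filter (fun u => ord u < T)) := by
        ext u
        simp only [Finset.mem_filter, Finset.mem_univ, true_and, Finset.mem_insert]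
        constructor
        · intro h
          rcases eq_or_ne (ord u) T with h' | h'
          · left; exact hinj (h'.trans hs.symm)
          · right; omega
        · rintro (rfl | h) <;> omega
      have hnot : s ∉ Finset.univ.filter (fun u : Fin (2 * n) => ord u < T) := by
        simp [hs]
      rw [hfilter, Finset.sum_insert hnot, pow_add]
      have h1 := step_bound ε σ p q hN ord hinj s
      rw [hs] at h1
      calc Gcnt ε σ p q ord (T + 1) ≤ N ^ cost p q ord s * Gcnt ε σ p q ord T := by
            have h2 : cost p q (fun u => ord u) s = cost p q ord s := rfl
            exact h1
        _ ≤ N ^ cost p q ord s * N ^ (∑ u ∈ Finset.univ.filter (fun u => ord u < T),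
              cost p q ord u) := Nat.mul_le_mul le_rfl ih
    · have hfe : Finset.univ.filter (fun u : Fin (2 * n) => ord u < T + 1)
          = Finset.univ.filter (fun u => ord u < T) := by
        ext u
        simp only [Finset.mem_filter, Finset.mem_univ, true_and]
        have : ord u ≠ T := fun h => hex ⟨u, h⟩
        omega
      have hfg : Gcnt ε σ p q ord (T + 1) = Gcnt ε σ p q ord T := by
        unfold Gcnt
        congr 1
        apply Finset.image_congr
        intro z _
        funext u
        have : ord u ≠ T := fun h => hex ⟨u, h⟩
        have h2 : (ord u < T + 1) = (ord u < T) := by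
          apply propext; constructor <;> (intro h'; omega)
        simp only [fmap, h2]
      rw [hfe, hfg]
      exact ih

lemma card_tupleSet_le (hN : 0 < N) (ord : Fin (2 * n) → ℕ) (hinj : Function.Injective ord)
    (hbound : ∀ u, ord u < 2 * n) :
    (tupleSet n N ε σ p q).card ≤ N ^ (∑ s, cost p q ord s) := by
  classical
  have h := chain ε σ p q hN ord hinj (2 * n)
  have hful : Finset.univ.filter (fun u : Fin (2 * n) => ord u < 2 * n) = Finset.univ := by
    apply Finset.filter_true_of_mem; intro u _; exact hbound u
  rw [hful] at h
  refine le_trans (le_of_eq ?_) h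
  unfold Gcnt
  rw [Finset.card_image_of_injOn]
  intro z hz y hy hzy
  have hcomp : ∀ u, z.1 u = y.1 u ∧ z.2 u = y.2 u := by
    intro u
    have := congrFun hzy u
    simp only [fmap, hbound u, if_pos] at this
    exact ⟨(Prod.mk.injEq _ _ _ _).mp (Option.some.inj this) |>.1,
           (Prod.mk.injEq _ _ _ _).mp (Option.some.inj this) |>.2⟩
  exact Prod.ext (funext fun u => (hcomp u).1) (funext fun u => (hcomp u).2)

def ordF (a x c : Fin (2 * n)) (u : Fin (2 * n)) : ℕ :=
  if u.val < a.val then u.val + 2 * n - a.val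
  else if u.val = x.val then c.val - a.val
  else if x.val < u.val ∧ u.val ≤ c.val then x.val - a.val + (c.val - u.val)
  else u.val - a.val

section OrdF

variable {a x c : Fin (2 * n)} (hax : a.val < x.val) (hxc : x.val < c.val)

include hax hxc

lemma ordF_inj : Function.Injective (ordF a x c) := by
  intro u v h
  have hu := u.isLt
  have hv := v.isLt
  have hc := c.isLt
  unfold ordF at h
  apply Fin.ext
  split_ifs at h <;> omega

lemma ordF_lt (u : Fin (2 * n)) : ordF a x c u < 2 * n := by
  have hu := u.isLt
  have hc := c.isLt
  unfold ordF
  split_ifs <;> omega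

lemma prn_two : 2 ≤ prnc (ordF a x c) x := by
  have hc := c.isLt
  have hx := x.isLt
  -- successor neighbour x+1
  have hsucc : (finRotate (2 * n)) x = (⟨x.val + 1, by omega⟩ : Fin (2 * n)) :=
    rot_eq (by simp)
  -- predecessor neighbour x-1
  have hpred : (finRotate (2 * n)) (⟨x.val - 1, by omega⟩ : Fin (2 * n)) = x :=
    rot_eq (by simp; omega)
  have hpred' : (finRotate (2 * n)).symm x = (⟨x.val - 1, by omega⟩ : Fin (2 * n)) := by
    rw [Equiv.symm_apply_eq, hpred]
  have h1 : ordF a x c ((finRotate (2 * n)) x) < ordF a x c x := by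
    rw [hsucc]
    unfold ordF
    simp only
    split_ifs <;> omega
  have h2 : ordF a x c ((finRotate (2 * n)).symm x) < ordF a x c x := by
    rw [hpred']
    unfold ordF
    simp only
    split_ifs <;> omega
  unfold prnc
  rw [if_pos h1, if_pos h2]

lemma prn_one (s : Fin (2 * n)) (hsa : s.val ≠ a.val) (hsc : s.val ≠ c.val) :
    1 ≤ prnc (ordF a x c) s := by
  have hc := c.isLt
  have hs := s.isLt
  rcases eq_or_ne s.val x.val with hsx | hsx
  · have : s = x := Fin.ext hsx
    subst this
    have := prn_two (a := a) (x := s) (c := c) hax hxc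
    omega
  -- helper: a predecessor neighbour u with smaller ordF gives the bound
  have pred_case : ∀ u : Fin (2 * n), (finRotate (2 * n)) u = s →
      ordF a x c u < ordF a x c s → 1 ≤ prnc (ordF a x c) s := by
    intro u hu hlt
    have hu' : (finRotate (2 * n)).symm s = u := by rw [Equiv.symm_apply_eq, hu]
    unfold prnc
    rw [hu', if_pos hlt]
    omega
  have succ_case : ordF a x c ((finRotate (2 * n)) s) < ordF a x c s →
      1 ≤ prnc (ordF a x c) s := by
    intro hlt
    unfold prnc
    rw [if_pos hlt]
    omega
  rcases lt_or_gt_of_ne hsx with hlt | hgt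
  · -- s.val < x.val : take predecessor, except possibly s = 0
    rcases Nat.eq_zero_or_pos s.val with hz | hpos
    · -- s = 0, so a > 0 ; predecessor is 2n-1
      apply pred_case ⟨2 * n - 1, by omega⟩
      · exact rot_eq_zero (by simp; omega) hz
      · unfold ordF
        simp only
        split_ifs <;> omega
    · apply pred_case ⟨s.val - 1, by omega⟩
      · exact rot_eq (by simp; omega)
      · unfold ordF
        simp only
        split_ifs <;> omega
  · -- x.val < s.val
    rcases lt_or_gt_of_ne hsc with hltc | hgtc
    · -- x < s < c : successor neighbour has smaller rank
      apply succ_case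
      have hsucc : (finRotate (2 * n)) s = (⟨s.val + 1, by omega⟩ : Fin (2 * n)) :=
        rot_eq (by simp)
      rw [hsucc]
      unfold ordF
      simp only
      split_ifs <;> omega
    · -- s > c : predecessor
      apply pred_case ⟨s.val - 1, by omega⟩
      · exact rot_eq (by simp; omega)
      · unfold ordF
        simp only
        split_ifs <;> omega

lemma ord_not_lt_y {y : Fin (2 * n)} (hyout : y.val < a.val ∨ c.val < y.val) :
    ¬ (ordF a x c y < ordF a x c x) := by
  have hc := c.isLt
  have hy := y.isLt
  unfold ordF
  split_ifs <;> omega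

end OrdF

lemma sum_indicator_invol (ord : Fin (2 * n) → ℕ) (hinj : Function.Injective ord)
    (e : Equiv.Perm (Fin (2 * n))) (he : Function.Involutive e) (hef : ∀ s, e s ≠ s) :
    ∑ s : Fin (2 * n), (if ord (e s) < ord s then 1 else 0) = n := by
  classical
  set f : Fin (2 * n) → ℕ := fun s => if ord (e s) < ord s then 1 else 0 with hf
  have h1 : ∑ s, f (e s) = ∑ s, f s := Equiv.sum_comp e f
  have h2 : ∀ s, f s + f (e s) = 1 := by
    intro s
    have hne : ord (e s) ≠ ord s := fun h => hef s (hinj h)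
    simp only [hf, he s]
    split_ifs <;> omega
  have h3 : ∑ s, (f s + f (e s)) = 2 * n := by
    calc ∑ s, (f s + f (e s)) = ∑ s : Fin (2 * n), 1 := Finset.sum_congr rfl (fun s _ => h2 s)
      _ = 2 * n := by simp
  rw [Finset.sum_add_distrib, h1] at h3
  have h5 : (Finset.univ.sum fun s => f s) = Finset.univ.sum f := rfl
  rw [h5] at h3
  omega

lemma sum_oldc (ord : Fin (2 * n) → ℕ) (hinj : Function.Injective ord)
    (hp : Function.Involutive p) (hq : Function.Involutive q)
    (hpf : ∀ s, p s ≠ s) (hqf : ∀ s, q s ≠ s) :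
    ∑ s : Fin (2 * n), oldc p q ord s = 2 * n := by
  unfold oldc
  rw [Finset.sum_add_distrib, sum_indicator_invol ord hinj p hp hpf,
    sum_indicator_invol ord hinj q hq hqf]
  omega

def st : Setoid (Fin (2 * n)) := ⟨joinRel p q, Relation.EqvGen.is_equivalence _⟩

lemma class_eq {u v : Fin (2 * n)} (h : joinRel p q u v) :
    {w | joinRel p q u w} = {w | joinRel p q v w} := by
  ext w
  constructor
  · intro hw
    exact Relation.EqvGen.trans _ _ _ (Relation.EqvGen.symm _ _ h) hw
  · intro hw
    exact Relation.EqvGen.trans _ _ _ h hw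

lemma quot_eq_iff {u v : Fin (2 * n)} :
    Quotient.mk (st p q) u = Quotient.mk (st p q) v ↔ joinRel p q u v := by
  constructor
  · exact fun h => Quotient.exact h
  · exact fun h => Quotient.sound h

lemma numBlocks_eq : numBlocks p q = Nat.card (Quotient (st p q)) := by
  unfold numBlocks
  have hset : {B : Set (Fin (2 * n)) | ∃ a, B = {w | joinRel p q a w}}
      = Set.range (fun a => {w | joinRel p q a w}) := by
    ext B
    simp only [Set.mem_setOf_eq, Set.mem_range]
    exact ⟨fun ⟨a, ha⟩ => ⟨a, ha.symm⟩, fun ⟨a, ha⟩ => ⟨a, ha.symm⟩⟩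
  rw [hset, ← Nat.card_coe_set_eq]
  have hf : ∀ (u v : Fin (2 * n)), joinRel p q u v →
      (⟨{w | joinRel p q u w}, ⟨u, rfl⟩⟩ :
        Set.range (fun a => {w | joinRel p q a w}))
      = ⟨{w | joinRel p q v w}, ⟨v, rfl⟩⟩ := by
    intro u v h
    exact Subtype.ext (class_eq p q h)
  let F : Quotient (st p q) → Set.range (fun a => {w | joinRel p q a w}) :=
    Quotient.lift (fun u => (⟨{w | joinRel p q u w}, ⟨u, rfl⟩⟩ :
      Set.range (fun a => {w | joinRel p q a w}))) hf
  have hbij : Function.Bijective F := by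
    constructor
    · intro C D h
      induction C using Quotient.inductionOn with
      | h u =>
      induction D using Quotient.inductionOn with
      | h v =>
      have h2 : {w | joinRel p q u w} = {w | joinRel p q v w} := congrArg Subtype.val h
      have h3 : v ∈ {w | joinRel p q u w} := by
        rw [h2]
        exact Relation.EqvGen.refl v
      exact Quotient.sound h3
    · rintro ⟨B, u, rfl⟩
      exact ⟨Quotient.mk _ u, rfl⟩
  exact (Nat.card_congr (Equiv.ofBijective F hbij)).symm

lemma escape (a b c d : Fin (2 * n)) (hab : a < b) (hbc : b < c) (hcd : c < d)
    (hac : joinRel p q a c) (hbd : joinRel p q b d) (hnab : ¬ joinRel p q a b)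
    (hp : Function.Involutive p) (hq : Function.Involutive q) :
    ∃ x y : Fin (2 * n), a.val < x.val ∧ x.val < c.val ∧ ¬ joinRel p q a x ∧
      (y = p x ∨ y = q x) ∧ (y.val < a.val ∨ c.val < y.val) := by
  set r : Fin (2 * n) → Fin (2 * n) → Prop := fun u v => p u = v ∨ q u = v with hr
  have hrsymm : Symmetric r := by
    rintro u v (h | h)
    · left; rw [← h, hp u]
    · right; rw [← h, hq u]
  have to_rtg : ∀ {u v : Fin (2 * n)}, joinRel p q u v → Relation.ReflTransGen r u v := by
    intro u v h
    induction h with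
    | rel u v huv => exact Relation.ReflTransGen.single huv
    | refl u => exact Relation.ReflTransGen.refl
    | symm u v _ ih => exact (haveI : Std.Symm r := ⟨fun _ _ h => hrsymm h⟩; Std.Symm.symm _ _ ih)
    | trans u v w _ _ ih1 ih2 => exact ih1.trans ih2
  have of_rtg : ∀ {u v : Fin (2 * n)}, Relation.ReflTransGen r u v → joinRel p q u v := by
    intro u v h
    induction h with
    | refl => exact Relation.EqvGen.refl _
    | tail _ h2 ih => exact Relation.EqvGen.trans _ _ _ ih (Relation.EqvGen.rel _ _ h2)
  have H : ∀ v : Fin (2 * n), Relation.ReflTransGen r b v →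
      (a.val < v.val ∧ v.val < c.val) ∨
      (∃ x y : Fin (2 * n), a.val < x.val ∧ x.val < c.val ∧ ¬ joinRel p q a x ∧
        (y = p x ∨ y = q x) ∧ (y.val < a.val ∨ c.val < y.val)) := by
    intro v hv
    induction hv with
    | refl =>
      left
      exact ⟨hab, hbc⟩
    | @tail u v huu huv ih =>
      rcases ih with hin | hgoal
      · have hbu : joinRel p q b u := of_rtg huu
        have hbv : joinRel p q b v :=
          Relation.EqvGen.trans _ _ _ hbu (Relation.EqvGen.rel _ _ huv)
        by_cases h1 : a.val < v.val ∧ v.val < c.val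
        · left; exact h1
        · right
          have hva : v ≠ a := by
            rintro rfl
            exact hnab (Relation.EqvGen.symm _ _ hbv)
          have hvc : v ≠ c := by
            rintro rfl
            exact hnab (Relation.EqvGen.trans _ _ _ hac (Relation.EqvGen.symm _ _ hbv))
          have hva' : v.val ≠ a.val := fun h => hva (Fin.ext h)
          have hvc' : v.val ≠ c.val := fun h => hvc (Fin.ext h)
          have hnu : ¬ joinRel p q a u := by
            intro h
            exact hnab (Relation.EqvGen.trans _ _ _ h (Relation.EqvGen.symm _ _ hbu))
          refine ⟨u, v, hin.1, hin.2, hnu, ?_, by omega⟩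
          rcases huv with h | h
          · left; exact h.symm
          · right; exact h.symm
      · right; exact hgoal
  rcases H d (to_rtg hbd) with hin | hgoal
  · exfalso
    have := hbc.trans hcd
    rw [Fin.lt_iff_val_lt_val] at hcd
    omega
  · exact hgoal

lemma main_count
    (hp : Function.Involutive p) (hq : Function.Involutive q)
    (hpf : ∀ s, p s ≠ s) (hqf : ∀ s, q s ≠ s)
    (a x c y : Fin (2 * n))
    (hax : a.val < x.val) (hxc : x.val < c.val)
    (hac : joinRel p q a c)
    (hnax : ¬ joinRel p q a x)
    (hy : y = p x ∨ y = q x)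
    (hyout : y.val < a.val ∨ c.val < y.val) :
    (∑ s, cost p q (ordF a x c) s) + numBlocks p q ≤ 2 * n := by
  classical
  letI : Fintype (Quotient (st p q)) := Fintype.ofFinite _
  set ord := ordF a x c with horddef
  have hinj : Function.Injective ord := ordF_inj hax hxc
  -- minimal representatives of blocks
  have hmr : ∀ C : Quotient (st p q), ∃ m0 : Fin (2 * n),
      Quotient.mk (st p q) m0 = C ∧ ∀ u, Quotient.mk (st p q) u = C → ord m0 ≤ ord u := by
    intro C
    obtain ⟨b0, hb0, hmin⟩ := Finset.exists_min_image
      (Finset.univ.filter (fun u => Quotient.mk (st p q) u = C)) ord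
      ⟨C.out, Finset.mem_filter.mpr ⟨Finset.mem_univ _, Quotient.out_eq C⟩⟩
    rw [Finset.mem_filter] at hb0
    exact ⟨b0, hb0.2, fun u hu => hmin u (Finset.mem_filter.mpr ⟨Finset.mem_univ u, hu⟩)⟩
  choose mrep hmrep1 hmrep2 using hmr
  set Ba := Quotient.mk (st p q) a with hBadef
  set φ : Quotient (st p q) → Fin (2 * n) := fun C => if C = Ba then x else mrep C with hφ
  set w : Fin (2 * n) → ℕ := fun s => (Finset.univ.filter (fun C => φ C = s)).card with hw
  have hsumw : ∑ s, w s = Nat.card (Quotient (st p q)) := by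
    rw [Nat.card_eq_fintype_card, ← Finset.card_univ]
    exact (Finset.card_eq_sum_card_fiberwise (fun C _ => Finset.mem_univ (φ C))).symm
  -- pointwise bound
  have hpt : ∀ s : Fin (2 * n), cost p q ord s + (oldc p q ord s + w s) ≤ 2 := by
    intro s
    have homax : oldc p q ord s ≤ max (oldc p q ord s) (prnc ord s) := le_max_left _ _
    have hpmax : prnc ord s ≤ max (oldc p q ord s) (prnc ord s) := le_max_right _ _
    have ho2 : oldc p q ord s ≤ 2 := by unfold oldc; split_ifs <;> omega
    have hq2 : prnc ord s ≤ 2 := by unfold prnc; split_ifs <;> omega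
    have hm2 : max (oldc p q ord s) (prnc ord s) ≤ 2 := max_le ho2 hq2
    by_cases hw0 : w s = 0
    · unfold cost; omega
    · have hfib : (Finset.univ.filter (fun C => φ C = s)).Nonempty :=
        Finset.card_pos.mp (Nat.pos_of_ne_zero hw0)
      obtain ⟨C, hC⟩ := hfib
      have hCs : φ C = s := (Finset.mem_filter.mp hC).2
      have hmin_case : ∀ C' : Quotient (st p q), C' ≠ Ba → φ C' = s →
          oldc p q ord s = 0 ∧ 1 ≤ prnc ord s ∧ Quotient.mk (st p q) s = C' := by
        intro C' hne hCs'
        have hsm : s = mrep C' := by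
          rw [hφ] at hCs'
          simp only [if_neg hne] at hCs'
          exact hCs'.symm
        have hscls : Quotient.mk (st p q) s = C' := by rw [hsm]; exact hmrep1 C'
        have hps : Quotient.mk (st p q) (p s) = C' := by
          rw [← hscls]
          exact Quotient.sound (Relation.EqvGen.rel _ _ (Or.inl (hp s)))
        have hqs : Quotient.mk (st p q) (q s) = C' := by
          rw [← hscls]
          exact Quotient.sound (Relation.EqvGen.rel _ _ (Or.inr (hq s)))
        have h1 : ord s ≤ ord (p s) := by
          have := hmrep2 C' (p s) hps
          rwa [← hsm] at this
        have h2 : ord s ≤ ord (q s) := by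
          have := hmrep2 C' (q s) hqs
          rwa [← hsm] at this
        have h3 : ord (p s) ≠ ord s := fun h => hpf s (hinj h)
        have h4 : ord (q s) ≠ ord s := fun h => hqf s (hinj h)
        have ho0 : oldc p q ord s = 0 := by unfold oldc; split_ifs <;> omega
        have hsa : s.val ≠ a.val := by
          intro h
          have : s = a := Fin.ext h
          subst this
          exact hne (hscls.symm.trans (by rw [hBadef]))
        have hsc : s.val ≠ c.val := by
          intro h
          have : s = c := Fin.ext h
          subst this
          have hca : Quotient.mk (st p q) s = Ba := by
            rw [hBadef]
            exact Quotient.sound (Relation.EqvGen.symm _ _ hac)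
          exact hne (hscls.symm.trans hca)
        exact ⟨ho0, prn_one hax hxc s hsa hsc, hscls⟩
      by_cases hex : ∃ C' : Quotient (st p q), C' ≠ Ba ∧ φ C' = s
      · obtain ⟨C', hne, hCs'⟩ := hex
        obtain ⟨ho0, hp1, hscls⟩ := hmin_case C' hne hCs'
        by_cases hBax : φ Ba = s
        · have hsx : s = x := by
            rw [hφ] at hBax
            simp only [if_pos rfl] at hBax
            exact hBax.symm
          have h2p : 2 ≤ prnc ord s := by rw [hsx]; exact prn_two hax hxc
          have hsub : Finset.univ.filter (fun C0 => φ C0 = s) ⊆ {Ba, C'} := by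
            intro C0 hC0
            rw [Finset.mem_filter] at hC0
            rcases eq_or_ne C0 Ba with rfl | hne0
            · exact Finset.mem_insert_self _ _
            · have h5 := (hmin_case C0 hne0 hC0.2).2.2
              have : C0 = C' := h5.symm.trans hscls
              rw [this]
              exact Finset.mem_insert_of_mem (Finset.mem_singleton_self _)
          have hwle : w s ≤ 2 := by
            refine le_trans (Finset.card_le_card hsub) ?_
            refine le_trans (Finset.card_insert_le _ _) ?_
            simp
          unfold cost; omega
        · have hsub : Finset.univ.filter (fun C0 => φ C0 = s) ⊆ {C'} := by
            intro C0 hC0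
            rw [Finset.mem_filter] at hC0
            have hne0 : C0 ≠ Ba := by
              rintro rfl
              exact hBax hC0.2
            have h5 := (hmin_case C0 hne0 hC0.2).2.2
            have : C0 = C' := h5.symm.trans hscls
            rw [this]
            exact Finset.mem_singleton_self _
          have hwle : w s ≤ 1 := by
            refine le_trans (Finset.card_le_card hsub) ?_
            simp
          unfold cost; omega
      · push_neg at hex
        have hCBa : C = Ba := by
          by_contra hne
          exact hex C hne hCs
        have hsx : s = x := by
          rw [hCBa, hφ] at hCs
          simp only [if_pos rfl] at hCs
          exact hCs.symm
        subst hsx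
        have hsub : Finset.univ.filter (fun C0 => φ C0 = s) ⊆ {Ba} := by
          intro C0 hC0
          rw [Finset.mem_filter] at hC0
          rcases eq_or_ne C0 Ba with rfl | hne0
          · exact Finset.mem_singleton_self _
          · exact absurd hC0.2 (hex C0 hne0)
        have hwle : w s ≤ 1 := by
          refine le_trans (Finset.card_le_card hsub) ?_
          simp
        have hny : ¬ (ord y < ord s) := ord_not_lt_y hax hxc hyout
        have ho1 : oldc p q ord s ≤ 1 := by
          rcases hy with hy | hy
          · rw [hy] at hny
            unfold oldc
            split_ifs <;> omega
          · rw [hy] at hny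
            unfold oldc
            split_ifs <;> omega
        have h2p : 2 ≤ prnc ord s := prn_two hax hxc
        unfold cost; omega
  -- sum up
  have hsum : ∑ s : Fin (2 * n), (cost p q ord s + (oldc p q ord s + w s)) ≤
      ∑ _s : Fin (2 * n), 2 :=
    Finset.sum_le_sum (fun s _ => hpt s)
  rw [Finset.sum_add_distrib] at hsum
  rw [Finset.sum_add_distrib] at hsum
  have hconst : ∑ _s : Fin (2 * n), 2 = 4 * n := by
    rw [Finset.sum_const, Finset.card_univ, Fintype.card_fin, smul_eq_mul]
    omega
  have hold := sum_oldc p q ord hinj hp hq hpf hqf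
  have hw' : (Finset.univ.sum fun s => w s) = Finset.univ.sum w := rfl
  rw [numBlocks_eq p q, ← hsumw]
  omega

lemma key_bound (hN : 1 ≤ N)
    (hp : Function.Involutive p) (hq : Function.Involutive q)
    (hpf : ∀ s, p s ≠ s) (hqf : ∀ s, q s ≠ s)
    (hcross : ∃ a b c d : Fin (2 * n), a < b ∧ b < c ∧ c < d ∧
      joinRel p q a c ∧ joinRel p q b d ∧ ¬ joinRel p q a b) :
    (tupleSet n N ε σ p q).card * N ^ numBlocks p q ≤ N ^ (2 * n) := by
  obtain ⟨a, b, c, d, hab, hbc, hcd, hac, hbd, hnab⟩ := hcross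
  obtain ⟨x, y, hax, hxc, hnax, hy, hyout⟩ :=
    escape p q a b c d hab hbc hcd hac hbd hnab hp hq
  have hinj : Function.Injective (ordF a x c) := ordF_inj hax hxc
  have hb : ∀ u, ordF a x c u < 2 * n := fun u => ordF_lt hax hxc u
  have h1 := card_tupleSet_le ε σ p q hN (ordF a x c) hinj hb
  have h2 := main_count p q hp hq hpf hqf a x c y hax hxc hac hnax hy hyout
  calc (tupleSet n N ε σ p q).card * N ^ numBlocks p q
      ≤ N ^ (∑ s, cost p q (ordF a x c) s) * N ^ numBlocks p q := Nat.mul_le_mul h1 le_rfl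
    _ = N ^ (∑ s, cost p q (ordF a x c) s + numBlocks p q) := (pow_add _ _ _).symm
    _ ≤ N ^ (2 * n) := Nat.pow_le_pow_right hN h2

end Stmt10

/-- If `p ∨ q` is crossing then, for any choice of the entry permutations,
`|A^{(p,q)}_N| = o(N^{2n + 1 - |p∨q|})` as `N → ∞` (stated by multiplying both sides by
`N^{|p∨q|}`). -/
theorem stmt10 (n : ℕ) (hn : 1 ≤ n)
    (ε : Fin (2 * n) → Bool)
    (p q : Equiv.Perm (Fin (2 * n)))
    (hp : Function.Involutive p) (hq : Function.Involutive q)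
    (hpf : ∀ s, p s ≠ s) (hqf : ∀ s, q s ≠ s)
    (hpε : ∀ s, ε (p s) ≠ ε s) (hqε : ∀ s, ε (q s) ≠ ε s)
    (hcross : ∃ a b c d : Fin (2 * n), a < b ∧ b < c ∧ c < d ∧
      joinRel p q a c ∧ joinRel p q b d ∧ ¬ joinRel p q a b) :
    ∀ σ : (N : ℕ) → Fin (2 * n) → Equiv.Perm (Fin N × Fin N),
      Tendsto (fun N : ℕ =>
        ((tupleSet n N ε (σ N) p q).card : ℝ) * (N : ℝ) ^ numBlocks p q /
          (N : ℝ) ^ (2 * n + 1)) atTop (nhds 0) := by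
  intro σf
  have key : ∀ N : ℕ, 1 ≤ N →
      (tupleSet n N ε (σf N) p q).card * N ^ numBlocks p q ≤ N ^ (2 * n) := by
    intro N hN
    exact Stmt10.key_bound ε (σf N) p q hN hp hq hpf hqf hcross
  have h0 : ∀ N : ℕ, 0 ≤ ((tupleSet n N ε (σf N) p q).card : ℝ) *
      (N : ℝ) ^ numBlocks p q / (N : ℝ) ^ (2 * n + 1) := by
    intro N
    positivity
  have hle : ∀ᶠ N : ℕ in atTop,
      ((tupleSet n N ε (σf N) p q).card : ℝ) * (N : ℝ) ^ numBlocks p q /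
        (N : ℝ) ^ (2 * n + 1) ≤ 1 / (N : ℝ) := by
    filter_upwards [eventually_ge_atTop 1] with N hN
    have hkey := key N hN
    have hNR : (0 : ℝ) < (N : ℝ) := by
      have : 0 < N := hN
      exact_mod_cast this
    rw [div_le_div_iff₀ (by positivity) hNR]
    have hcast : ((tupleSet n N ε (σf N) p q).card : ℝ) * (N : ℝ) ^ numBlocks p q
        ≤ (N : ℝ) ^ (2 * n) := by exact_mod_cast hkey
    calc ((tupleSet n N ε (σf N) p q).card : ℝ) * (N : ℝ) ^ numBlocks p q * (N : ℝ)
        ≤ (N : ℝ) ^ (2 * n) * (N : ℝ) := mul_le_mul_of_nonneg_right hcast hNR.le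
      _ = 1 * (N : ℝ) ^ (2 * n + 1) := by rw [pow_succ]; ring
  exact squeeze_zero' (Filter.Eventually.of_forall h0) hle tendsto_one_div_atTop_nhds_zero_nat
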